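/- Let N, d, i be real numbers with N(i − 1) = d(d + i). Let α be a real number such that α ≠ 0, α + 1 ≠ 0, N/α − (d+i) ≠ 0, N/(α+1) − d ≠ 0, and such that u := N/(N/α − (d+i)) − d ≠ 0 and v := N/(N/(α+1) − d) − (d+i) ≠ 0. Then N/u = N/v − 1. -/

import Mathlib

/-- The key algebraic identity behind matching in 3 steps: if `N(i−1) = d(d+i)`
and `u = N/(N/α − (d+i)) − d`, `v = N/(N/(α+1) − d) − (d+i)` (with all relevant
quantities nonzero), then `N/u = N/v − 1`. -/
theorem matching_identity (N d i α : ℝ) (h : N * (i - 1) = d * (d + i))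
    (hα : α ≠ 0) (hα1 : α + 1 ≠ 0)
    (h1 : N / α - (d + i) ≠ 0) (h2 : N / (α + 1) - d ≠ 0)
    (hu : N / (N / α - (d + i)) - d ≠ 0)
    (hv : N / (N / (α + 1) - d) - (d + i) ≠ 0) :
    N / (N / (N / α - (d + i)) - d) = N / (N / (N / (α + 1) - d) - (d + i)) - 1 := by
  have hA : N - α * (d + i) ≠ 0 := by
    intro hz; apply h1; field_simp; linarith
  have hB : N - (α + 1) * d ≠ 0 := by
    intro hz; apply h2; field_simp; linarith
  have eU : N / (N / α - (d + i)) - d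
      = (N * α - d * (N - α * (d + i))) / (N - α * (d + i)) := by
    rw [show N / α - (d + i) = (N - α * (d + i)) / α by field_simp,
      div_div_eq_mul_div, div_sub' hA]; ring_nf
  have eV : N / (N / (α + 1) - d) - (d + i)
      = (N * (α + 1) - (d + i) * (N - (α + 1) * d)) / (N - (α + 1) * d) := by
    rw [show N / (α + 1) - d = (N - (α + 1) * d) / (α + 1) by field_simp,
      div_div_eq_mul_div, div_sub' hB]; ring_nf
  rw [eU] at hu ⊢
  rw [eV] at hv ⊢
  have hU : N * α - d * (N - α * (d + i)) ≠ 0 := fun hz => hu (by rw [hz]; simp)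
  have hV : N * (α + 1) - (d + i) * (N - (α + 1) * d) ≠ 0 := fun hz => hv (by rw [hz]; simp)
  rw [div_div_eq_mul_div, div_div_eq_mul_div]
  rw [div_sub_one hV, div_eq_div_iff hU hV]
  ring_nf
  linear_combination (-(d * i * α) - d * i * α ^ 2 - d ^ 2 * α - d ^ 2 * α ^ 2 - N * α
    - N * α ^ 2 + N * i * α + N * d + 2 * N * d * α - N ^ 2) * h
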